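/- For every complex number $x$ with $|x| < 1$, the infinite products $\prod_{n=1}^{\infty}(1+x^{2n-1})$, $\prod_{n=1}^{\infty}(1-x^{n})$, $\prod_{n=1}^{\infty}(1-x^{2n})$, and $\prod_{n=1}^{\infty}(1-x^{4n})$ converge (the corresponding families are multipliable), and $\Big(\prod_{n=1}^{\infty}(1+x^{2n-1})\Big)\Big(\prod_{n=1}^{\infty}(1-x^{n})\Big)\Big(\prod_{n=1}^{\infty}(1-x^{4n})\Big) = \Big(\prod_{n=1}^{\infty}(1-x^{2n})\Big)^{2}$. -/

import Mathlib

open Filter Finset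

lemma mult_aux (x : ℂ) (hx : ‖x‖ < 1) (g : ℕ → ℂ) (hg : ∀ n, ‖g n‖ ≤ ‖x‖ ^ (n + 1)) :
    Multipliable (fun n : ℕ => 1 + g n) := by
  have hlt : ∀ n, ‖g n‖ < 1 := fun n =>
    lt_of_le_of_lt (hg n) (pow_lt_one₀ (norm_nonneg x) hx (Nat.succ_ne_zero n))
  have hne : ∀ n, (1 : ℂ) + g n ≠ 0 := by
    intro n h
    have : g n = -1 := by linear_combination h
    simpa [this] using hlt n
  have hsum : Summable (fun n : ℕ => Complex.log (1 + g n)) := by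
    apply Summable.of_norm_bounded_eventually_nat (g := fun n => (3/2) * ‖x‖ ^ (n + 1))
    · exact (summable_geometric_of_lt_one (norm_nonneg x) hx).mul_left _ |>.comp_injective
        (add_left_injective 1)
    · have h0 : Tendsto (fun n : ℕ => ‖x‖ ^ (n + 1)) atTop (nhds 0) := by
        have := (tendsto_pow_atTop_nhds_zero_of_lt_one (norm_nonneg x) hx).comp
          (tendsto_add_atTop_nat 1)
        exact this
      filter_upwards [h0.eventually_le_const (by norm_num : (0:ℝ) < 1/2)] with n hn
      calc ‖Complex.log (1 + g n)‖ ≤ (3/2) * ‖g n‖ :=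
            Complex.norm_log_one_add_half_le_self (le_trans (hg n) hn)
        _ ≤ (3/2) * ‖x‖ ^ (n + 1) := by nlinarith [hg n]
  exact Complex.multipliable_of_summable_log hsum

theorem stmt_19 (x : ℂ) (hx : ‖x‖ < 1) :
    Multipliable (fun n : ℕ => 1 + x ^ (2 * n + 1)) ∧
    Multipliable (fun n : ℕ => 1 - x ^ (n + 1)) ∧
    Multipliable (fun n : ℕ => 1 - x ^ (2 * n + 2)) ∧
    Multipliable (fun n : ℕ => 1 - x ^ (4 * n + 4)) ∧
    (∏' n : ℕ, (1 + x ^ (2 * n + 1))) * (∏' n : ℕ, (1 - x ^ (n + 1))) *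
        (∏' n : ℕ, (1 - x ^ (4 * n + 4))) =
      (∏' n : ℕ, (1 - x ^ (2 * n + 2))) ^ 2 := by
  have hxb : ∀ a b : ℕ, a ≥ b → ‖x ^ a‖ ≤ ‖x‖ ^ b := by
    intro a b hab
    rw [norm_pow]
    exact pow_le_pow_of_le_one (norm_nonneg x) hx.le hab
  have hA : Multipliable (fun n : ℕ => 1 + x ^ (2 * n + 1)) :=
    mult_aux x hx _ (fun n => hxb _ _ (by omega))
  have hB : Multipliable (fun n : ℕ => 1 - x ^ (n + 1)) := by
    have := mult_aux x hx (fun n => -(x ^ (n + 1))) (fun n => by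
      simpa using hxb (n+1) (n+1) le_rfl)
    simpa [sub_eq_add_neg] using this
  have hC : Multipliable (fun n : ℕ => 1 - x ^ (2 * n + 2)) := by
    have := mult_aux x hx (fun n => -(x ^ (2 * n + 2))) (fun n => by
      simpa using hxb (2*n+2) (n+1) (by omega))
    simpa [sub_eq_add_neg] using this
  have hD : Multipliable (fun n : ℕ => 1 - x ^ (4 * n + 4)) := by
    have := mult_aux x hx (fun n => -(x ^ (4 * n + 4))) (fun n => by
      simpa using hxb (4*n+4) (n+1) (by omega))
    simpa [sub_eq_add_neg] using this
  refine ⟨hA, hB, hC, hD, ?_⟩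
  have key : ∀ N : ℕ,
      (∏ k ∈ range N, (1 + x ^ (2 * k + 1))) * (∏ n ∈ range (2 * N), (1 - x ^ (n + 1))) *
        (∏ k ∈ range N, (1 - x ^ (4 * k + 4))) =
      (∏ n ∈ range (2 * N), (1 - x ^ (2 * n + 2))) * (∏ k ∈ range N, (1 - x ^ (2 * k + 2))) := by
    intro N
    induction N with
    | zero => simp
    | succ N ih =>
      have h2 : 2 * (N + 1) = (2 * N + 1) + 1 := by ring
      rw [h2, prod_range_succ, prod_range_succ, prod_range_succ, prod_range_succ,
        prod_range_succ, prod_range_succ, prod_range_succ]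
      linear_combination (1 - x ^ (4*N+2)) * (1 - x ^ (4*N+4)) * (1 - x ^ (2*N+2)) * ih
  have h2N : Filter.Tendsto (fun N : ℕ => 2 * N) atTop atTop :=
    tendsto_atTop_mono (fun n => by simp only [id_eq]; omega) tendsto_id
  have tA := hA.hasProd.tendsto_prod_nat
  have tB := hB.hasProd.tendsto_prod_nat.comp h2N
  have tC := hC.hasProd.tendsto_prod_nat
  have tC2 := hC.hasProd.tendsto_prod_nat.comp h2N
  have tD := hD.hasProd.tendsto_prod_nat
  have hL := (tA.mul tB).mul tD
  have hR := tC2.mul tC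
  have hLR : Filter.Tendsto (fun N : ℕ =>
      (∏ k ∈ range N, (1 + x ^ (2 * k + 1))) * (∏ n ∈ range (2 * N), (1 - x ^ (n + 1))) *
        (∏ k ∈ range N, (1 - x ^ (4 * k + 4)))) atTop
      (nhds ((∏' n : ℕ, (1 - x ^ (2 * n + 2))) * (∏' n : ℕ, (1 - x ^ (2 * n + 2))))) := by
    have : (fun N : ℕ =>
      (∏ k ∈ range N, (1 + x ^ (2 * k + 1))) * (∏ n ∈ range (2 * N), (1 - x ^ (n + 1))) *
        (∏ k ∈ range N, (1 - x ^ (4 * k + 4)))) = fun N : ℕ =>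
      (∏ n ∈ range (2 * N), (1 - x ^ (2 * n + 2))) * (∏ k ∈ range N, (1 - x ^ (2 * k + 2))) :=
      funext key
    rw [this]
    exact hR
  have := tendsto_nhds_unique hL hLR
  rw [this, sq]
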